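/- Let H be a self-adjoint operator on a Hilbert space and set D_H = ∩_{n≥1} D(Hⁿ). Let [1,∞) ∋ t ↦ A_t ∈ B(H) be a family of bounded operators such that: (i) sup_t ‖A_t(1+H)^{-1}‖ < ∞ and sup_t ‖A_t^{(1)}(1+H)^{-1}‖ < ∞, where A_t^{(1)} = i[H,A_t] is assumed bounded; (ii) A_t Φ and A_t^{(1)} Φ converge as t → ∞ for all Φ in a dense subspace D. Then lim_{t→∞} A_t Ψ exists for every Ψ ∈ D_H. -/

import Mathlib

open Filter Topology

noncomputable section

local notation "⟪" x ", " y "⟫" => @inner ℂ _ _ x y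

/-- The domain `D(H^ℓ)` of the `ℓ`-th power of an operator with domain `dom` and
action `Hf`. -/
def Dpow {H : Type*} [AddCommGroup H] [Module ℂ H]
    (dom : Set H) (Hf : H →ₗ[ℂ] H) : ℕ → Set H
  | 0 => Set.univ
  | (k + 1) => {x | x ∈ dom ∧ Hf x ∈ Dpow dom Hf k}

lemma aux_small (K δ : ℝ) (hK : 0 ≤ K) (hδ : 0 < δ) :
    ∃ x : ℝ, 0 < x ∧ x ≤ 1 ∧ K * Real.sqrt x < δ := by
  refine ⟨min 1 ((δ / (K + 1)) ^ 2), lt_min one_pos (by positivity), min_le_left _ _, ?_⟩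
  have h1 : Real.sqrt (min 1 ((δ / (K + 1)) ^ 2)) ≤ Real.sqrt ((δ / (K + 1)) ^ 2) :=
    Real.sqrt_le_sqrt (min_le_right _ _)
  have h2 : Real.sqrt ((δ / (K + 1)) ^ 2) = δ / (K + 1) := Real.sqrt_sq (by positivity)
  have h3 : K * Real.sqrt (min 1 ((δ / (K + 1)) ^ 2)) ≤ K * (δ / (K + 1)) :=
    mul_le_mul_of_nonneg_left (le_trans h1 (le_of_eq h2)) hK
  have h4 : K * (δ / (K + 1)) < δ := by
    rw [mul_div_assoc']
    rw [div_lt_iff₀ (by linarith)]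
    nlinarith
  linarith

lemma aux_le_sqrt {x : ℝ} (h0 : 0 ≤ x) (h1 : x ≤ 1) : x ≤ Real.sqrt x := by
  nlinarith [Real.sq_sqrt h0, Real.sqrt_nonneg x]

set_option maxHeartbeats 1000000 in
lemma aux_inv {H : Type*} [NormedAddCommGroup H] [InnerProductSpace ℂ H] [CompleteSpace H]
    (R : H →L[ℂ] H) (Rsa : ∀ z w : H, ⟪R z, w⟫ = ⟪z, R w⟫)
    (a : ℝ) (ha : 0 < a) :
    ∃ Q : H →L[ℂ] H,
      (∀ z, (a:ℂ) • Q z + R (R (Q z)) = z) ∧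
      (∀ z, Q (R z) = R (Q z)) ∧
      (∀ z, a * ‖Q z‖ ≤ ‖z‖) ∧
      (∀ z, Q (R (R z)) = z - (a:ℂ) • Q z) ∧
      (∀ z, a * ‖Q (R z)‖ ≤ Real.sqrt a * ‖z‖) := by
  classical
  set lr : ℝ := ‖R‖ ^ 2 with hlr
  have hlr0 : (0:ℝ) ≤ lr := by positivity
  set K : H →L[ℂ] H := ((lr : ℂ) • (1 : H →L[ℂ] H)) - R * R with hKdef
  have hKz : ∀ z, ‖K z‖ ≤ lr * ‖z‖ := by
    intro z
    have hKzeq : K z = (lr:ℂ) • z - R (R z) := by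
      simp [hKdef, ContinuousLinearMap.mul_apply]
    have hre : RCLike.re ⟪z, R (R z)⟫ = ‖R z‖ ^ 2 := by
      rw [← Rsa z (R z)]
      exact inner_self_eq_norm_sq (𝕜 := ℂ) (R z)
    have hsq : ‖K z‖ ^ 2 ≤ (lr * ‖z‖) ^ 2 := by
      rw [hKzeq, norm_sub_sq (𝕜 := ℂ)]
      have h1 : ‖(lr:ℂ) • z‖ = lr * ‖z‖ := by
        rw [norm_smul, Complex.norm_real, Real.norm_of_nonneg hlr0]
      have h2 : RCLike.re ⟪(lr:ℂ) • z, R (R z)⟫ = lr * ‖R z‖ ^ 2 := by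
        rw [inner_smul_left, Complex.conj_ofReal, RCLike.mul_re]
        simp [hre]
      have h3 : ‖R (R z)‖ ^ 2 ≤ lr * ‖R z‖ ^ 2 := by
        have := R.le_opNorm (R z)
        nlinarith [norm_nonneg (R (R z)), norm_nonneg (R z), norm_nonneg R]
      rw [h1, h2]
      nlinarith [sq_nonneg (‖R z‖)]
    have h0 : (0:ℝ) ≤ lr * ‖z‖ := by positivity
    nlinarith [norm_nonneg (K z)]
  have hK : ‖K‖ ≤ lr := ContinuousLinearMap.opNorm_le_bound K hlr0 hKz
  set B : H →L[ℂ] H := (((a + lr)⁻¹ : ℝ) : ℂ) • K with hBdef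
  have hab : (0:ℝ) < a + lr := by linarith
  have hB : ‖B‖ < 1 := by
    have h6 : ‖B‖ ≤ (a + lr)⁻¹ * lr := by
      rw [hBdef]
      calc ‖(((a + lr)⁻¹ : ℝ) : ℂ) • K‖ = (a+lr)⁻¹ * ‖K‖ := by
            rw [norm_smul, Complex.norm_real, Real.norm_of_nonneg (by positivity)]
        _ ≤ (a+lr)⁻¹ * lr := mul_le_mul_of_nonneg_left hK (by positivity)
    have h5 : (a + lr)⁻¹ * lr < 1 := by
      rw [inv_mul_lt_iff₀ hab, mul_one]; linarith
    linarith
  set u : (H →L[ℂ] H)ˣ := Units.oneSub B hB with hu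
  set Q : H →L[ℂ] H := (((a + lr)⁻¹ : ℝ) : ℂ) • (↑u⁻¹ : H →L[ℂ] H) with hQdef
  set S : H →L[ℂ] H := ((a:ℝ) : ℂ) • (1 : H →L[ℂ] H) + R * R with hSdef
  have hcan : ((a + lr : ℝ) : ℂ) * (((a + lr)⁻¹ : ℝ) : ℂ) = 1 := by
    rw [← Complex.ofReal_mul, mul_inv_cancel₀ (ne_of_gt hab), Complex.ofReal_one]
  have hcan' : (((a + lr)⁻¹ : ℝ) : ℂ) * ((a + lr : ℝ) : ℂ) = 1 := by
    rw [mul_comm]; exact hcan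
  have h6 : ((a + lr : ℝ) : ℂ) • (1 : H →L[ℂ] H) - K = S := by
    rw [hKdef, hSdef]
    rw [show ((a + lr : ℝ) : ℂ) = (a : ℂ) + (lr : ℂ) by push_cast; ring]
    rw [add_smul]
    abel
  have hSu : S = ((a + lr : ℝ) : ℂ) • (u : H →L[ℂ] H) := by
    rw [← h6, hu, Units.val_oneSub, smul_sub, hBdef, smul_smul, hcan, one_smul]
  have hSQ : S * Q = 1 := by
    rw [hSu, hQdef, smul_mul_smul_comm, hcan, u.mul_inv, one_smul]
  have hQS : Q * S = 1 := by
    rw [hSu, hQdef, smul_mul_smul_comm, hcan', u.inv_mul, one_smul]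
  have hRS : R * S = S * R := by
    rw [hSdef, mul_add, add_mul, mul_smul_comm, smul_mul_assoc, one_mul, mul_one, mul_assoc]
  have hQR : Q * R = R * Q := by
    calc Q * R = Q * R * (S * Q) := by rw [hSQ, mul_one]
      _ = Q * (R * S) * Q := by rw [← mul_assoc, ← mul_assoc]
      _ = Q * (S * R) * Q := by rw [hRS]
      _ = (Q * S) * (R * Q) := by rw [← mul_assoc, ← mul_assoc, mul_assoc]
      _ = R * Q := by rw [hQS, one_mul]
  have prop1 : ∀ z, (a:ℂ) • Q z + R (R (Q z)) = z := by
    intro z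
    have h7 := DFunLike.congr_fun hSQ z
    simpa [hSdef, ContinuousLinearMap.mul_apply, ContinuousLinearMap.add_apply,
      ContinuousLinearMap.smul_apply, ContinuousLinearMap.one_apply] using h7
  have prop2 : ∀ z, Q (R z) = R (Q z) := by
    intro z
    have h7 := DFunLike.congr_fun hQR z
    simpa [ContinuousLinearMap.mul_apply] using h7
  have prop4 : ∀ z, Q (R (R z)) = z - (a:ℂ) • Q z := by
    intro z
    have h7 := DFunLike.congr_fun hQS z
    simp only [hSdef, ContinuousLinearMap.mul_apply, ContinuousLinearMap.add_apply,
      ContinuousLinearMap.smul_apply, ContinuousLinearMap.one_apply, map_add, map_smul] at h7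
    rw [eq_sub_iff_add_eq, add_comm]
    exact h7
  have hkey9 : ∀ z, RCLike.re ⟪Q z, z⟫ = a * ‖Q z‖ ^ 2 + ‖R (Q z)‖ ^ 2 := by
    intro z
    have hiz : ⟪Q z, z⟫ = ⟪Q z, (a:ℂ) • Q z + R (R (Q z))⟫ :=
      congrArg (fun w => ⟪Q z, w⟫) (prop1 z).symm
    have hr1 : RCLike.re ⟪Q z, R (R (Q z))⟫ = ‖R (Q z)‖ ^ 2 := by
      rw [← Rsa (Q z) (R (Q z))]
      exact inner_self_eq_norm_sq (𝕜 := ℂ) (R (Q z))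
    have hr2 : RCLike.re ⟪Q z, Q z⟫ = ‖Q z‖ ^ 2 := inner_self_eq_norm_sq (𝕜 := ℂ) (Q z)
    rw [hiz, inner_add_right, inner_smul_right, map_add, RCLike.mul_re]
    simp [hr1, hr2]
    left
    rw [← Complex.ofReal_pow, Complex.ofReal_re]
  have prop3 : ∀ z, a * ‖Q z‖ ≤ ‖z‖ := by
    intro z
    by_cases hz : ‖Q z‖ = 0
    · rw [hz, mul_zero]; exact norm_nonneg z
    have hzpos : 0 < ‖Q z‖ := lt_of_le_of_ne (norm_nonneg _) (Ne.symm hz)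
    have h8 : a * ‖Q z‖ ^ 2 ≤ RCLike.re ⟪Q z, z⟫ := by
      rw [hkey9 z]; nlinarith [sq_nonneg ‖R (Q z)‖]
    have h10 : RCLike.re ⟪Q z, z⟫ ≤ ‖Q z‖ * ‖z‖ := re_inner_le_norm (𝕜 := ℂ) _ _
    have := le_trans h8 h10
    nlinarith
  have prop5 : ∀ z, a * ‖Q (R z)‖ ≤ Real.sqrt a * ‖z‖ := by
    intro z
    have hQRz : Q (R z) = R (Q z) := prop2 z
    have h11 : ‖R (Q z)‖ ^ 2 ≤ ‖Q z‖ * ‖z‖ := by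
      have h12 : RCLike.re ⟪Q z, z⟫ ≤ ‖Q z‖ * ‖z‖ := re_inner_le_norm (𝕜 := ℂ) _ _
      have h13 := hkey9 z
      nlinarith [sq_nonneg ‖Q z‖, norm_nonneg (Q z)]
    have h15 : a * (‖Q z‖ * ‖z‖) ≤ ‖z‖ ^ 2 := by
      have h16 := mul_le_mul_of_nonneg_right (prop3 z) (norm_nonneg z)
      nlinarith
    have hfin : (a * ‖Q (R z)‖) ^ 2 ≤ (Real.sqrt a * ‖z‖) ^ 2 := by
      rw [mul_pow, mul_pow, Real.sq_sqrt ha.le, hQRz]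
      calc a ^ 2 * ‖R (Q z)‖ ^ 2 ≤ a ^ 2 * (‖Q z‖ * ‖z‖) :=
            mul_le_mul_of_nonneg_left h11 (by positivity)
        _ = a * (a * (‖Q z‖ * ‖z‖)) := by ring
        _ ≤ a * ‖z‖ ^ 2 := mul_le_mul_of_nonneg_left h15 ha.le
    have h17 := Real.sqrt_le_sqrt hfin
    rwa [Real.sqrt_sq (by positivity), Real.sqrt_sq (by positivity)] at h17
  exact ⟨Q, prop1, prop2, prop3, prop4, prop5⟩

lemma aux_sigma_cauchy {H : Type*} [NormedAddCommGroup H] [InnerProductSpace ℂ H]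
    (σ : ℝ → H →L[ℂ] H) (Cb : ℝ) (hCb0 : 0 ≤ Cb)
    (hCb : ∀ t : ℝ, 1 ≤ t → ∀ w, ‖σ t w‖ ≤ Cb * ‖w‖)
    (D : Set H) (hD : Dense D)
    (hcv : ∀ Φ ∈ D, ∃ L, Tendsto (fun t => σ t Φ) atTop (𝓝 L))
    (v : H) (ε : ℝ) (hε : 0 < ε) :
    ∃ T : ℝ, 1 ≤ T ∧ ∀ t, T ≤ t → ∀ s, T ≤ s → ‖σ t v - σ s v‖ < ε := by
  obtain ⟨Φ, hΦD, hΦ⟩ := Metric.mem_closure_iff.mp (hD v) (ε/(3*(Cb+1))) (by positivity)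
  obtain ⟨L, hL⟩ := hcv Φ hΦD
  obtain ⟨N, hN⟩ := (Metric.tendsto_atTop.mp hL) (ε/6) (by positivity)
  refine ⟨max N 1, le_max_right _ _, ?_⟩
  intro t ht s hs
  have ht1 : (1:ℝ) ≤ t := le_trans (le_max_right _ _) ht
  have hs1 : (1:ℝ) ≤ s := le_trans (le_max_right _ _) hs
  have htN : N ≤ t := le_trans (le_max_left _ _) ht
  have hsN : N ≤ s := le_trans (le_max_left _ _) hs
  have hsplit : σ t v - σ s v = σ t (v - Φ) + (σ t Φ - σ s Φ) + σ s (Φ - v) := by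
    simp only [map_sub]
    abel
  have hdist : ‖v - Φ‖ < ε/(3*(Cb+1)) := by rw [← dist_eq_norm]; exact hΦ
  have hsm : Cb * ‖v - Φ‖ < ε/3 := by
    have h1 : Cb * ‖v - Φ‖ ≤ (Cb+1) * ‖v - Φ‖ :=
      mul_le_mul_of_nonneg_right (by linarith) (norm_nonneg _)
    have h2 : (Cb+1) * ‖v - Φ‖ < (Cb+1) * (ε/(3*(Cb+1))) :=
      mul_lt_mul_of_pos_left hdist (by linarith)
    have h3 : (Cb+1) * (ε/(3*(Cb+1))) = ε/3 := by
      field_simp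
    linarith
  have b1 : ‖σ t (v - Φ)‖ ≤ Cb * ‖v - Φ‖ := hCb t ht1 _
  have b3 : ‖σ s (Φ - v)‖ ≤ Cb * ‖v - Φ‖ := by
    have := hCb s hs1 (Φ - v)
    rwa [norm_sub_rev] at this
  have b2 : ‖σ t Φ - σ s Φ‖ < ε/3 := by
    have d1 := hN t htN
    have d2 := hN s hsN
    rw [dist_eq_norm] at d1 d2
    have htri : ‖σ t Φ - σ s Φ‖ ≤ ‖σ t Φ - L‖ + ‖σ s Φ - L‖ := by
      have h4 := norm_sub_le_norm_sub_add_norm_sub (σ t Φ) L (σ s Φ)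
      rw [norm_sub_rev L (σ s Φ)] at h4
      exact h4
    calc ‖σ t Φ - σ s Φ‖ ≤ ‖σ t Φ - L‖ + ‖σ s Φ - L‖ := htri
      _ < ε/6 + ε/6 := add_lt_add d1 d2
      _ ≤ ε/3 := by linarith
  rw [hsplit]
  calc ‖σ t (v - Φ) + (σ t Φ - σ s Φ) + σ s (Φ - v)‖
      ≤ ‖σ t (v - Φ)‖ + ‖σ t Φ - σ s Φ‖ + ‖σ s (Φ - v)‖ := norm_add₃_le
    _ < ε/3 + ε/3 + ε/3 := by
        have := lt_of_le_of_lt b1 hsm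
        have := lt_of_le_of_lt b3 hsm
        linarith
    _ = ε := by ring

lemma aux_norm5 {H : Type*} [SeminormedAddCommGroup H] (x1 x2 x3 x4 x5 : H) :
    ‖x1 + x2 - x3 - x4 + x5‖ ≤ ‖x1‖ + ‖x2‖ + ‖x3‖ + ‖x4‖ + ‖x5‖ := by
  have h1 : ‖x1 + x2‖ ≤ ‖x1‖ + ‖x2‖ := norm_add_le _ _
  have h2 : ‖x1 + x2 - x3‖ ≤ ‖x1 + x2‖ + ‖x3‖ := norm_sub_le _ _
  have h3 : ‖x1 + x2 - x3 - x4‖ ≤ ‖x1 + x2 - x3‖ + ‖x4‖ := norm_sub_le _ _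
  have h4 : ‖x1 + x2 - x3 - x4 + x5‖ ≤ ‖x1 + x2 - x3 - x4‖ + ‖x5‖ := norm_add_le _ _
  linarith


set_option maxHeartbeats 1600000

/-- **Existence of asymptotic limits on the smooth domain.**
Let `H` be self-adjoint (represented by the self-adjoint `LinearPMap` `T` with linear
extension `Hext` of its action and resolvent `R = (1+H)^{-1}`), and let
`t ↦ A_t` be a family of bounded operators such that (i) `sup_t ‖A_t(1+H)^{-1}‖ < ∞` and
`sup_t ‖A_t^{(1)}(1+H)^{-1}‖ < ∞`, where `A_t^{(1)} = i[H, A_t]` is assumed bounded, and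
(ii) `A_tΦ` and `A_t^{(1)}Φ` converge as `t → ∞` for all `Φ` in a dense subspace `D`.
Then `lim_{t→∞} A_tΨ` exists for every `Ψ ∈ D_H = ∩ₙ D(Hⁿ)`. -/
theorem asymptotic_limit_on_smooth_domain
    {H : Type*} [NormedAddCommGroup H] [InnerProductSpace ℂ H] [CompleteSpace H]
    (T : H →ₗ.[ℂ] H) (hTsa : IsSelfAdjoint T)
    (Hext : H →ₗ[ℂ] H) (hext : ∀ x : T.domain, Hext x = T x)
    (R : H →L[ℂ] H)
    (hRmem : ∀ z : H, R z ∈ T.domain)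
    (hRright : ∀ z : H, R z + Hext (R z) = z)
    (hRleft : ∀ x ∈ T.domain, R (x + Hext x) = x)
    (A A1 : ℝ → (H →L[ℂ] H))
    (hA1comm : ∀ t : ℝ, ∀ x ∈ T.domain, ∀ y ∈ T.domain,
      ⟪x, A1 t y⟫ = Complex.I * (⟪Hext x, A t y⟫ - ⟪x, A t (Hext y)⟫))
    (hbound : ∃ C : ℝ, ∀ t : ℝ, 1 ≤ t →
      ‖(A t).comp R‖ ≤ C ∧ ‖(A1 t).comp R‖ ≤ C)
    (D : Set H) (hD : Dense D)
    (hconv : ∀ Φ ∈ D,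
      (∃ L : H, Tendsto (fun t : ℝ => A t Φ) atTop (𝓝 L)) ∧
      (∃ L : H, Tendsto (fun t : ℝ => A1 t Φ) atTop (𝓝 L))) :
    ∀ Ψ ∈ ⋂ n : ℕ, Dpow (T.domain : Set H) Hext n,
      ∃ L : H, Tendsto (fun t : ℝ => A t Ψ) atTop (𝓝 L) := by
  intro Ψ hΨ
  obtain ⟨C, hC⟩ := hbound
  have hC0 : (0:ℝ) ≤ C := le_trans (norm_nonneg _) (hC 1 le_rfl).1
  -- symmetry of `T`
  have hdense : Dense (T.domain : Set H) := hTsa.dense_domain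
  have hTT : T.adjoint = T := LinearPMap.isSelfAdjoint_def.mp hTsa
  have hfa := LinearPMap.adjoint_isFormalAdjoint (T := T) hdense
  rw [hTT] at hfa
  have hsymT : ∀ x y : T.domain, ⟪Hext (x:H), (y : H)⟫ = ⟪(x : H), Hext (y:H)⟫ := by
    intro x y
    rw [hext x, hext y]
    exact hfa x y
  -- `R` is self-adjoint
  have Rsa : ∀ z w : H, ⟪R z, w⟫ = ⟪z, R w⟫ := by
    intro z w
    have hz := hRright z
    have hw := hRright w
    have hsym := hsymT ⟨R z, hRmem z⟩ ⟨R w, hRmem w⟩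
    calc ⟪R z, w⟫ = ⟪R z, R w + Hext (R w)⟫ := by rw [hw]
      _ = ⟪R z, R w⟫ + ⟪R z, Hext (R w)⟫ := inner_add_right _ _ _
      _ = ⟪R z, R w⟫ + ⟪Hext (R z), R w⟫ := by rw [← hsym]
      _ = ⟪R z + Hext (R z), R w⟫ := (inner_add_left _ _ _).symm
      _ = ⟪z, R w⟫ := by rw [hz]
  -- the key commutation identity
  have key : ∀ (t : ℝ) (w : H), R (A t w) = A t (R w) + Complex.I • R (A1 t (R w)) := by
    intro t w
    apply ext_inner_left ℂ
    intro z
    have h1 : Hext (R z) = z - R z := by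
      rw [eq_sub_iff_add_eq, add_comm]; exact hRright z
    have h2 : Hext (R w) = w - R w := by
      rw [eq_sub_iff_add_eq, add_comm]; exact hRright w
    have hcm := hA1comm t (R z) (hRmem z) (R w) (hRmem w)
    rw [h1, h2] at hcm
    rw [inner_add_right, inner_smul_right, ← Rsa z (A1 t (R w)), hcm,
      ← Rsa z (A t w), map_sub, inner_sub_left, inner_sub_right]
    linear_combination (⟪R z, A t w⟫ - ⟪z, A t (R w)⟫) * Complex.I_mul_I
  -- the smooth vector and its preimages
  have hΨ2 : Ψ ∈ Dpow (T.domain : Set H) Hext 2 := Set.mem_iInter.mp hΨ 2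
  have hΨd : Ψ ∈ T.domain := hΨ2.1
  have hHΨd : Hext Ψ ∈ T.domain := hΨ2.2.1
  set Ψ₁ : H := Ψ + Hext Ψ with hΨ₁def
  have hΨ₁d : Ψ₁ ∈ T.domain := T.domain.add_mem hΨd hHΨd
  set Ψ₂ : H := Ψ₁ + Hext Ψ₁ with hΨ₂def
  have hRΨ₁ : R Ψ₁ = Ψ := by rw [hΨ₁def]; exact hRleft Ψ hΨd
  have hRΨ₂ : R Ψ₂ = Ψ₁ := by rw [hΨ₂def]; exact hRleft Ψ₁ hΨ₁d
  have hΨRR : R (R Ψ₂) = Ψ := by rw [hRΨ₂, hRΨ₁]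
  -- pointwise uniform bounds
  have mA : ∀ t : ℝ, 1 ≤ t → ∀ w : H, ‖A t (R w)‖ ≤ C * ‖w‖ := by
    intro t ht w
    have h := ((A t).comp R).le_opNorm w
    rw [ContinuousLinearMap.comp_apply] at h
    exact le_trans h (mul_le_mul_of_nonneg_right (hC t ht).1 (norm_nonneg w))
  have mA1 : ∀ t : ℝ, 1 ≤ t → ∀ w : H, ‖A1 t (R w)‖ ≤ C * ‖w‖ := by
    intro t ht w
    have h := ((A1 t).comp R).le_opNorm w
    rw [ContinuousLinearMap.comp_apply] at h
    exact le_trans h (mul_le_mul_of_nonneg_right (hC t ht).2 (norm_nonneg w))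
  -- the auxiliary family `σ t = R ∘ A t`
  have hσb : ∀ t : ℝ, 1 ≤ t → ∀ w : H,
      ‖(fun t : ℝ => R.comp (A t)) t w‖ ≤ (C * (1 + ‖R‖)) * ‖w‖ := by
    intro t ht w
    have heq : (fun t : ℝ => R.comp (A t)) t w = R (A t w) := rfl
    rw [heq, key t w]
    have g1 := mA t ht w
    have g2 : ‖R (A1 t (R w))‖ ≤ ‖R‖ * (C * ‖w‖) :=
      le_trans (R.le_opNorm _) (mul_le_mul_of_nonneg_left (mA1 t ht w) (norm_nonneg R))
    calc ‖A t (R w) + Complex.I • R (A1 t (R w))‖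
        ≤ ‖A t (R w)‖ + ‖Complex.I • R (A1 t (R w))‖ := norm_add_le _ _
      _ = ‖A t (R w)‖ + ‖R (A1 t (R w))‖ := by rw [norm_smul, Complex.norm_I, one_mul]
      _ ≤ C * ‖w‖ + ‖R‖ * (C * ‖w‖) := by linarith
      _ = (C * (1 + ‖R‖)) * ‖w‖ := by ring
  have hσconv : ∀ Φ ∈ D, ∃ L, Tendsto (fun t : ℝ => (fun t : ℝ => R.comp (A t)) t Φ)
      atTop (𝓝 L) := by
    intro Φ hΦ
    obtain ⟨⟨L, hL⟩, -⟩ := hconv Φ hΦ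
    refine ⟨R L, ?_⟩
    have := (R.continuous.tendsto L).comp hL
    simpa [Function.comp_def] using this
  -- Cauchy criterion
  refine cauchySeq_tendsto_of_complete ?_
  rw [Metric.cauchySeq_iff]
  intro ε hε
  obtain ⟨c, hc0, hc1, hcb⟩ := aux_small (C * ‖Ψ₂‖) (ε/9) (by positivity) (by positivity)
  obtain ⟨P, hP1, hP2, hP3, hP4, hP5⟩ := aux_inv R Rsa c hc0
  obtain ⟨a, ha0, ha1, haK⟩ :=
    aux_small ((2*C*‖Ψ₁‖ + 2*C*‖R‖*‖Ψ‖ + 4*C*‖Ψ‖)/c) (ε/9) (by positivity) (by positivity)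
  obtain ⟨Q, hQ1, hQ2, hQ3, hQ4, hQ5⟩ := aux_inv R Rsa a ha0
  have haa : a ≤ Real.sqrt a := aux_le_sqrt ha0.le ha1
  set v : H := R (R (P Ψ)) with hvdef
  have hP1' : (c:ℂ) • P Ψ + v = Ψ := by rw [hvdef]; exact hP1 Ψ
  obtain ⟨T0, hT01, hT0⟩ := aux_sigma_cauchy (fun t : ℝ => R.comp (A t)) (C * (1 + ‖R‖))
    (by positivity) hσb D hD hσconv v (ε/9 * a/(‖R‖+1)) (by positivity)
  -- smul norms
  have nsmula : ∀ x : H, ‖(a:ℂ) • x‖ = a * ‖x‖ := by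
    intro x; rw [norm_smul, Complex.norm_real, Real.norm_of_nonneg ha0.le]
  have nsmulc : ∀ x : H, ‖(c:ℂ) • x‖ = c * ‖x‖ := by
    intro x; rw [norm_smul, Complex.norm_real, Real.norm_of_nonneg hc0.le]
  have nsmulI : ∀ x : H, ‖Complex.I • x‖ = ‖x‖ := by
    intro x; rw [norm_smul, Complex.norm_I, one_mul]
  -- geometry of the cutoffs
  have hPΨ : P Ψ = R (P (R Ψ₂)) := by rw [← hΨRR]; exact hP2 (R Ψ₂)
  have hPΨ' : P Ψ = R (P Ψ₁) := by rw [← hRΨ₁]; exact hP2 Ψ₁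
  have hnormPΨ : ‖P Ψ‖ ≤ ‖Ψ‖ / c := by
    rw [le_div_iff₀ hc0]
    have := hP3 Ψ
    linarith [hP3 Ψ]
  have hnormPΨ₁ : ‖P Ψ₁‖ ≤ ‖Ψ₁‖ / c := by
    rw [le_div_iff₀ hc0]
    linarith [hP3 Ψ₁]
  have hnorm2 : ∀ x : H, ‖Q (R (R x))‖ ≤ 2 * ‖x‖ := by
    intro x
    rw [hQ4 x]
    calc ‖x - (a:ℂ) • Q x‖ ≤ ‖x‖ + ‖(a:ℂ) • Q x‖ := norm_sub_le _ _
      _ = ‖x‖ + a * ‖Q x‖ := by rw [nsmula]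
      _ ≤ ‖x‖ + ‖x‖ := by linarith [hQ3 x]
      _ = 2 * ‖x‖ := by ring
  have hQv : Q v = R (Q (R (R (P Ψ₁)))) := by
    rw [hvdef, hPΨ']
    exact hQ2 (R (R (P Ψ₁)))
  have hQvnorm : ‖Q v‖ ≤ 2 * (‖Ψ‖ / c) := by
    have h1 : ‖Q v‖ ≤ 2 * ‖P Ψ‖ := by rw [hvdef]; exact hnorm2 (P Ψ)
    have h2 : 2 * ‖P Ψ‖ ≤ 2 * (‖Ψ‖ / c) := by linarith
    linarith
  -- the decomposition
  have decomp : ∀ r : ℝ, A r Ψ =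
      A r ((c:ℂ) • P Ψ) + (a:ℂ) • A r (Q v)
        - (a:ℂ) • (Complex.I • Q (R (A1 r (R (R (Q v))))))
        - (a:ℂ) • (Complex.I • Q (R (R (A1 r (R (Q v))))))
        + R (Q (R (A r v))) := by
    intro r
    have keyk : ∀ w : H, R (R (A r w)) = A r (R (R w)) + Complex.I • R (A1 r (R (R w)))
        + Complex.I • R (R (A1 r (R w))) := by
      intro w
      rw [key r w]
      simp only [map_add, map_smul]
      rw [key r (R w)]
    have h1 : A r v = (a:ℂ) • A r (Q v) + A r (R (R (Q v))) := by
      conv_lhs => rw [← hQ1 v]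
      simp only [map_add, map_smul]
    have h2 : A r (R (R (Q v))) = R (R (A r (Q v)))
        - Complex.I • R (A1 r (R (R (Q v)))) - Complex.I • R (R (A1 r (R (Q v)))) := by
      rw [keyk (Q v)]
      abel
    have h3 : Q (A r v) = A r (Q v)
        - Complex.I • Q (R (A1 r (R (R (Q v)))))
        - Complex.I • Q (R (R (A1 r (R (Q v))))) := by
      rw [h1]
      simp only [map_add, map_smul]
      rw [h2]
      simp only [map_sub, map_smul]
      rw [hQ4 (A r (Q v))]
      abel
    have h4 : A r Ψ = A r ((c:ℂ) • P Ψ) + A r v := by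
      conv_lhs => rw [← hP1']
      simp only [map_add]
    have h5 : A r v = (a:ℂ) • Q (A r v) + R (Q (R (A r v))) := by
      have h6 : R (Q (R (A r v))) = R (R (Q (A r v))) := congrArg R (hQ2 (A r v))
      rw [h6]
      exact (hQ1 (A r v)).symm
    conv_lhs => rw [h4, h5, h3]
    rw [smul_sub, smul_sub]
    abel
  -- the bounds
  have hE1 : ∀ r : ℝ, 1 ≤ r → ‖A r ((c:ℂ) • P Ψ)‖ < ε/9 := by
    intro r hr
    have heq : (c:ℂ) • P Ψ = R ((c:ℂ) • P (R Ψ₂)) := by rw [map_smul, hPΨ]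
    rw [heq]
    calc ‖A r (R ((c:ℂ) • P (R Ψ₂)))‖ ≤ C * ‖(c:ℂ) • P (R Ψ₂)‖ := mA r hr _
      _ = C * (c * ‖P (R Ψ₂)‖) := by rw [nsmulc]
      _ ≤ C * (Real.sqrt c * ‖Ψ₂‖) := mul_le_mul_of_nonneg_left (hP5 Ψ₂) hC0
      _ = (C * ‖Ψ₂‖) * Real.sqrt c := by ring
      _ < ε/9 := hcb
  have hKK : ∀ r : ℝ, 1 ≤ r →
      (2*C*‖Ψ₁‖/c) * Real.sqrt a ≤ ((2*C*‖Ψ₁‖ + 2*C*‖R‖*‖Ψ‖ + 4*C*‖Ψ‖)/c) * Real.sqrt a := by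
    intro r hr
    gcongr
    have h1 : 0 ≤ 2*C*‖R‖*‖Ψ‖ := by positivity
    have h2 : 0 ≤ 4*C*‖Ψ‖ := by positivity
    linarith
  have hE2 : ∀ r : ℝ, 1 ≤ r → ‖(a:ℂ) • A r (Q v)‖ < ε/9 := by
    intro r hr
    have hw2 : ‖Q (R (R (P Ψ₁)))‖ ≤ 2 * (‖Ψ₁‖ / c) := by
      have := hnorm2 (P Ψ₁)
      linarith
    have hmain : ‖(a:ℂ) • A r (Q v)‖ ≤ (2*C*‖Ψ₁‖/c) * a := by
      rw [nsmula, hQv]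
      calc a * ‖A r (R (Q (R (R (P Ψ₁)))))‖ ≤ a * (C * ‖Q (R (R (P Ψ₁)))‖) :=
            mul_le_mul_of_nonneg_left (mA r hr _) ha0.le
        _ ≤ a * (C * (2 * (‖Ψ₁‖ / c))) :=
            mul_le_mul_of_nonneg_left (mul_le_mul_of_nonneg_left hw2 hC0) ha0.le
        _ = (2*C*‖Ψ₁‖/c) * a := by ring
    have hstep : (2*C*‖Ψ₁‖/c) * a ≤ (2*C*‖Ψ₁‖/c) * Real.sqrt a :=
      mul_le_mul_of_nonneg_left haa (by positivity)
    calc ‖(a:ℂ) • A r (Q v)‖ ≤ (2*C*‖Ψ₁‖/c) * a := hmain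
      _ ≤ (2*C*‖Ψ₁‖/c) * Real.sqrt a := hstep
      _ ≤ ((2*C*‖Ψ₁‖ + 2*C*‖R‖*‖Ψ‖ + 4*C*‖Ψ‖)/c) * Real.sqrt a := hKK r hr
      _ < ε/9 := haK
  have hE3 : ∀ r : ℝ, 1 ≤ r →
      ‖(a:ℂ) • (Complex.I • Q (R (A1 r (R (R (Q v))))))‖ < ε/9 := by
    intro r hr
    have hx3 : ‖A1 r (R (R (Q v)))‖ ≤ C * ‖R (Q v)‖ := mA1 r hr (R (Q v))
    have hRQv : ‖R (Q v)‖ ≤ ‖R‖ * (2 * (‖Ψ‖ / c)) :=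
      le_trans (R.le_opNorm _) (mul_le_mul_of_nonneg_left hQvnorm (norm_nonneg R))
    have hmain : ‖(a:ℂ) • (Complex.I • Q (R (A1 r (R (R (Q v))))))‖
        ≤ (2*C*‖R‖*‖Ψ‖/c) * Real.sqrt a := by
      rw [nsmula, nsmulI]
      calc a * ‖Q (R (A1 r (R (R (Q v)))))‖
          ≤ Real.sqrt a * ‖A1 r (R (R (Q v)))‖ := hQ5 _
        _ ≤ Real.sqrt a * (C * (‖R‖ * (2 * (‖Ψ‖ / c)))) := by
            have h7 : ‖A1 r (R (R (Q v)))‖ ≤ C * (‖R‖ * (2 * (‖Ψ‖ / c))) :=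
              le_trans hx3 (mul_le_mul_of_nonneg_left hRQv hC0)
            exact mul_le_mul_of_nonneg_left h7 (Real.sqrt_nonneg a)
        _ = (2*C*‖R‖*‖Ψ‖/c) * Real.sqrt a := by ring
    have hKK3 : (2*C*‖R‖*‖Ψ‖/c) * Real.sqrt a
        ≤ ((2*C*‖Ψ₁‖ + 2*C*‖R‖*‖Ψ‖ + 4*C*‖Ψ‖)/c) * Real.sqrt a := by
      gcongr
      have h1 : 0 ≤ 2*C*‖Ψ₁‖ := by positivity
      have h2 : 0 ≤ 4*C*‖Ψ‖ := by positivity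
      linarith
    calc ‖(a:ℂ) • (Complex.I • Q (R (A1 r (R (R (Q v))))))‖
        ≤ (2*C*‖R‖*‖Ψ‖/c) * Real.sqrt a := hmain
      _ ≤ ((2*C*‖Ψ₁‖ + 2*C*‖R‖*‖Ψ‖ + 4*C*‖Ψ‖)/c) * Real.sqrt a := hKK3
      _ < ε/9 := haK
  have hE4 : ∀ r : ℝ, 1 ≤ r →
      ‖(a:ℂ) • (Complex.I • Q (R (R (A1 r (R (Q v))))))‖ < ε/9 := by
    intro r hr
    have hx4 : ‖A1 r (R (Q v))‖ ≤ C * ‖Q v‖ := mA1 r hr (Q v)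
    have hx4' : ‖A1 r (R (Q v))‖ ≤ C * (2 * (‖Ψ‖ / c)) :=
      le_trans hx4 (mul_le_mul_of_nonneg_left hQvnorm hC0)
    have hmain : ‖(a:ℂ) • (Complex.I • Q (R (R (A1 r (R (Q v))))))‖
        ≤ (4*C*‖Ψ‖/c) * a := by
      rw [nsmula, nsmulI]
      calc a * ‖Q (R (R (A1 r (R (Q v)))))‖
          ≤ a * (2 * ‖A1 r (R (Q v))‖) :=
            mul_le_mul_of_nonneg_left (hnorm2 _) ha0.le
        _ ≤ a * (2 * (C * (2 * (‖Ψ‖ / c)))) :=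
            mul_le_mul_of_nonneg_left
              (mul_le_mul_of_nonneg_left hx4' (by norm_num : (0:ℝ) ≤ 2)) ha0.le
        _ = (4*C*‖Ψ‖/c) * a := by ring
    have hstep : (4*C*‖Ψ‖/c) * a ≤ (4*C*‖Ψ‖/c) * Real.sqrt a :=
      mul_le_mul_of_nonneg_left haa (by positivity)
    have hKK4 : (4*C*‖Ψ‖/c) * Real.sqrt a
        ≤ ((2*C*‖Ψ₁‖ + 2*C*‖R‖*‖Ψ‖ + 4*C*‖Ψ‖)/c) * Real.sqrt a := by
      gcongr
      have h1 : 0 ≤ 2*C*‖Ψ₁‖ := by positivity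
      have h2 : 0 ≤ 2*C*‖R‖*‖Ψ‖ := by positivity
      linarith
    calc ‖(a:ℂ) • (Complex.I • Q (R (R (A1 r (R (Q v))))))‖ ≤ (4*C*‖Ψ‖/c) * a := hmain
      _ ≤ (4*C*‖Ψ‖/c) * Real.sqrt a := hstep
      _ ≤ ((2*C*‖Ψ₁‖ + 2*C*‖R‖*‖Ψ‖ + 4*C*‖Ψ‖)/c) * Real.sqrt a := hKK4
      _ < ε/9 := haK
  -- assembling
  refine ⟨max T0 1, ?_⟩
  intro t ht s hs
  have ht1 : (1:ℝ) ≤ t := le_trans (le_max_right _ _) ht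
  have hs1 : (1:ℝ) ≤ s := le_trans (le_max_right _ _) hs
  have htT : T0 ≤ t := le_trans (le_max_left _ _) ht
  have hsT : T0 ≤ s := le_trans (le_max_left _ _) hs
  have hΔ := hT0 t htT s hsT
  have hΔ' : ‖R (A t v) - R (A s v)‖ < ε/9 * a/(‖R‖+1) := by
    simpa using hΔ
  have hE5 : ‖R (Q (R (A t v))) - R (Q (R (A s v)))‖ < ε/9 := by
    have hfold : R (Q (R (A t v))) - R (Q (R (A s v)))
        = R (Q (R (A t v) - R (A s v))) := by
      simp only [map_sub]
    rw [hfold]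
    have hQΔ : ‖Q (R (A t v) - R (A s v))‖ ≤ ‖R (A t v) - R (A s v)‖ / a := by
      rw [le_div_iff₀ ha0]
      linarith [hQ3 (R (A t v) - R (A s v))]
    have h8 : ‖R (Q (R (A t v) - R (A s v)))‖
        ≤ (‖R‖+1) * (‖R (A t v) - R (A s v)‖ / a) := by
      calc ‖R (Q (R (A t v) - R (A s v)))‖ ≤ ‖R‖ * ‖Q (R (A t v) - R (A s v))‖ :=
            R.le_opNorm _
        _ ≤ (‖R‖+1) * ‖Q (R (A t v) - R (A s v))‖ := by
            have := norm_nonneg (Q (R (A t v) - R (A s v)))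
            nlinarith
        _ ≤ (‖R‖+1) * (‖R (A t v) - R (A s v)‖ / a) := by
            have h9 : (0:ℝ) ≤ ‖R‖+1 := by positivity
            exact mul_le_mul_of_nonneg_left hQΔ h9
    have h10 : (‖R‖+1) * (‖R (A t v) - R (A s v)‖ / a)
        < (‖R‖+1) * ((ε/9 * a/(‖R‖+1)) / a) := by
      gcongr
    have h11 : (‖R‖+1) * ((ε/9 * a/(‖R‖+1)) / a) = ε/9 := by
      field_simp
    linarith
  rw [dist_eq_norm]
  have hdiff : A t Ψ - A s Ψ =
      (A t ((c:ℂ) • P Ψ) - A s ((c:ℂ) • P Ψ))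
      + ((a:ℂ) • A t (Q v) - (a:ℂ) • A s (Q v))
      - ((a:ℂ) • (Complex.I • Q (R (A1 t (R (R (Q v))))))
          - (a:ℂ) • (Complex.I • Q (R (A1 s (R (R (Q v)))))))
      - ((a:ℂ) • (Complex.I • Q (R (R (A1 t (R (Q v))))))
          - (a:ℂ) • (Complex.I • Q (R (R (A1 s (R (Q v)))))))
      + (R (Q (R (A t v))) - R (Q (R (A s v)))) := by
    rw [decomp t, decomp s]
    abel
  rw [hdiff]
  have htri := aux_norm5
    (A t ((c:ℂ) • P Ψ) - A s ((c:ℂ) • P Ψ))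
    ((a:ℂ) • A t (Q v) - (a:ℂ) • A s (Q v))
    ((a:ℂ) • (Complex.I • Q (R (A1 t (R (R (Q v))))))
        - (a:ℂ) • (Complex.I • Q (R (A1 s (R (R (Q v)))))))
    ((a:ℂ) • (Complex.I • Q (R (R (A1 t (R (Q v))))))
        - (a:ℂ) • (Complex.I • Q (R (R (A1 s (R (Q v)))))))
    (R (Q (R (A t v))) - R (Q (R (A s v))))
  have b1 : ‖A t ((c:ℂ) • P Ψ) - A s ((c:ℂ) • P Ψ)‖ < ε/9 + ε/9 :=
    lt_of_le_of_lt (norm_sub_le _ _) (add_lt_add (hE1 t ht1) (hE1 s hs1))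
  have b2 : ‖(a:ℂ) • A t (Q v) - (a:ℂ) • A s (Q v)‖ < ε/9 + ε/9 :=
    lt_of_le_of_lt (norm_sub_le _ _) (add_lt_add (hE2 t ht1) (hE2 s hs1))
  have b3 : ‖(a:ℂ) • (Complex.I • Q (R (A1 t (R (R (Q v))))))
      - (a:ℂ) • (Complex.I • Q (R (A1 s (R (R (Q v))))))‖ < ε/9 + ε/9 :=
    lt_of_le_of_lt (norm_sub_le _ _) (add_lt_add (hE3 t ht1) (hE3 s hs1))
  have b4 : ‖(a:ℂ) • (Complex.I • Q (R (R (A1 t (R (Q v))))))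
      - (a:ℂ) • (Complex.I • Q (R (R (A1 s (R (Q v))))))‖ < ε/9 + ε/9 :=
    lt_of_le_of_lt (norm_sub_le _ _) (add_lt_add (hE4 t ht1) (hE4 s hs1))
  calc ‖_‖ ≤ _ := htri
    _ < (ε/9 + ε/9) + (ε/9 + ε/9) + (ε/9 + ε/9) + (ε/9 + ε/9) + ε/9 := by
        have := hE5
        linarith
    _ = ε := by ring


end
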